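/- Let α ∈ ℂ with 0 < |α| < 1, let ε₀ > 0 and C ≥ 0, and let A, B : ℂ → ℂ satisfy |A(z)| ≤ C|z| and |B(z)| ≤ C|z| for |z| < ε₀. Define φ(z₁,z₂) = (α z₁, z₂ + 1 + A(z₁) + B(z₁) z₂). Then for every n ≥ 1 there exist functions A_{n,k}, B_{n,k} : ℂ → ℂ (1 ≤ k ≤ n) such that for all z₁ with |z₁| < ε₀ and all z₂ ∈ ℂ the second component of the n-th iterate satisfies (φ⁽ⁿ⁾(z₁,z₂))₂ = z₂ + n + Σ_{k=1}^{n} [ k·A_{n,k}(z₁) + z₂·B_{n,k}(z₁) ], with the estimates |A_{n,k}(z₁)| ≤ C |α|^{k−1} (∏_{j=1}^{n−1} (1 + C|α|^{j}|z₁|)) |z₁| and |B_{n,k}(z₁)| ≤ C |α|^{k−1} (∏_{j=1}^{n−1} (1 + C|α|^{j}|z₁|)) |z₁| for all 1 ≤ k ≤ n. -/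

import Mathlib

lemma prod_expand (b : ℕ → ℂ) : ∀ n s : ℕ,
    ∏ j ∈ Finset.Ico s n, (1 + b j)
      = 1 + ∑ j ∈ Finset.Ico s n, b j * ∏ i ∈ Finset.Ico (j+1) n, (1 + b i) := by
  intro n
  induction n with
  | zero => simp
  | succ n ih =>
    intro s
    rcases le_or_gt (n+1) s with h | h
    · rw [Finset.Ico_eq_empty (by omega)]; simp
    · have hs : s ≤ n := by omega
      rw [Finset.prod_Ico_succ_top hs, Finset.sum_Ico_succ_top hs, ih s]
      have key : ∀ j ∈ Finset.Ico s n,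
          b j * ∏ i ∈ Finset.Ico (j+1) (n+1), (1+b i)
            = (b j * ∏ i ∈ Finset.Ico (j+1) n, (1+b i)) * (1+b n) := by
        intro j hj
        rw [Finset.prod_Ico_succ_top (by simp at hj; omega)]; ring
      rw [Finset.sum_congr rfl key, ← Finset.sum_mul]
      simp [Finset.Ico_self]
      ring

lemma swap_sum (f : ℕ → ℂ) (n : ℕ) :
    ∑ i ∈ Finset.range n, ∑ j ∈ Finset.Ico (i+1) n, f j
      = ∑ j ∈ Finset.range n, (j : ℂ) * f j := by
  rw [Finset.sum_comm' (t' := Finset.range n) (s' := fun j => Finset.range j)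
    (by intro x y; simp only [Finset.mem_range, Finset.mem_Ico]; omega)]
  simp [Finset.sum_const, Finset.card_range, nsmul_eq_mul]

/-- The inductive decomposition (formulas (action5)–(action6)) inside Lemma
`action-lem`: the second component of the `n`-th iterate of
`φ(z₁,z₂) = (α z₁, z₂ + 1 + A(z₁) + B(z₁) z₂)` decomposes as
`z₂ + n + Σ_{k=1}^n [k A_{n,k}(z₁) + z₂ B_{n,k}(z₁)]` with the stated estimates. -/
theorem stmt_2 (α : ℂ) (hα0 : 0 < ‖α‖) (hα1 : ‖α‖ < 1)
    (ε₀ : ℝ) (hε₀ : 0 < ε₀) (C : ℝ) (hC : 0 ≤ C)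
    (A B : ℂ → ℂ)
    (hA : ∀ z : ℂ, ‖z‖ < ε₀ → ‖A z‖ ≤ C * ‖z‖)
    (hB : ∀ z : ℂ, ‖z‖ < ε₀ → ‖B z‖ ≤ C * ‖z‖)
    (φ : ℂ × ℂ → ℂ × ℂ)
    (hφ : ∀ z₁ z₂ : ℂ, φ (z₁, z₂) = (α * z₁, z₂ + 1 + A z₁ + B z₁ * z₂)) :
    ∀ n : ℕ, 1 ≤ n → ∃ An Bn : ℕ → ℂ → ℂ,
      (∀ z₁ : ℂ, ‖z₁‖ < ε₀ → ∀ z₂ : ℂ,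
        (φ^[n] (z₁, z₂)).2 =
          z₂ + (n : ℂ) + ∑ k ∈ Finset.Icc 1 n, ((k : ℂ) * An k z₁ + z₂ * Bn k z₁)) ∧
      (∀ z₁ : ℂ, ‖z₁‖ < ε₀ → ∀ k : ℕ, 1 ≤ k → k ≤ n →
        ‖An k z₁‖ ≤
          C * ‖α‖ ^ (k - 1) *
            (∏ j ∈ Finset.Icc 1 (n - 1), (1 + C * ‖α‖ ^ j * ‖z₁‖)) *
            ‖z₁‖ ∧
        ‖Bn k z₁‖ ≤
          C * ‖α‖ ^ (k - 1) *
            (∏ j ∈ Finset.Icc 1 (n - 1), (1 + C * ‖α‖ ^ j * ‖z₁‖)) *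
            ‖z₁‖) := by
  intro n hn
  have hsmall : ∀ z₁ : ℂ, ‖z₁‖ < ε₀ → ∀ j : ℕ,
      ‖α ^ j * z₁‖ < ε₀ := by
    intro z₁ hz₁ j
    rw [norm_mul, norm_pow]
    calc ‖α‖ ^ j * ‖z₁‖ ≤ 1 * ‖z₁‖ := by
          apply mul_le_mul_of_nonneg_right _ (norm_nonneg _)
          exact pow_le_one₀ (norm_nonneg _) hα1.le
      _ < ε₀ := by rwa [one_mul]
  refine ⟨fun k z₁ => (k : ℂ)⁻¹ * (A (α ^ (k-1) * z₁) + ((k-1 : ℕ) : ℂ) * B (α ^ (k-1) * z₁))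
      * ∏ j ∈ Finset.Ico k n, (1 + B (α ^ j * z₁)),
    fun k z₁ => B (α ^ (k-1) * z₁) * ∏ j ∈ Finset.Ico k n, (1 + B (α ^ j * z₁)),
    ?_, ?_⟩
  · -- the formula
    intro z₁ hz₁ z₂
    have hiter : ∀ m : ℕ, φ^[m] (z₁, z₂) =
        (α ^ m * z₁, z₂ * ∏ j ∈ Finset.Ico 0 m, (1 + B (α ^ j * z₁))
          + ∑ i ∈ Finset.range m,
              (1 + A (α ^ i * z₁)) * ∏ j ∈ Finset.Ico (i+1) m, (1 + B (α ^ j * z₁))) := by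
      intro m
      induction m with
      | zero => simp
      | succ m ih =>
        rw [Function.iterate_succ_apply', ih, hφ]
        have h1 : ∀ i ∈ Finset.range m,
            (1 + A (α ^ i * z₁)) * ∏ j ∈ Finset.Ico (i+1) (m+1), (1 + B (α ^ j * z₁))
              = ((1 + A (α ^ i * z₁)) * ∏ j ∈ Finset.Ico (i+1) m, (1 + B (α ^ j * z₁)))
                  * (1 + B (α ^ m * z₁)) := by
          intro i hi
          rw [Finset.prod_Ico_succ_top (by simp at hi; omega)]; ring
        ext
        · simp [pow_succ]; ring
        · simp only
          rw [Finset.sum_range_succ, Finset.sum_congr rfl h1, ← Finset.sum_mul,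
            Finset.prod_Ico_succ_top (Nat.zero_le _), Finset.Ico_self, Finset.prod_empty]
          ring
    rw [hiter n]
    simp only
    have hP0 := prod_expand (fun j => B (α ^ j * z₁)) n 0
    simp only at hP0
    have hPi : ∀ i, ∏ j ∈ Finset.Ico (i+1) n, (1 + B (α ^ j * z₁))
        = 1 + ∑ j ∈ Finset.Ico (i+1) n,
            B (α ^ j * z₁) * ∏ l ∈ Finset.Ico (j+1) n, (1 + B (α ^ l * z₁)) := by
      intro i
      have := prod_expand (fun j => B (α ^ j * z₁)) n (i+1)
      simpa using this
    have hswap := swap_sum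
      (fun j => B (α ^ j * z₁) * ∏ l ∈ Finset.Ico (j+1) n, (1 + B (α ^ l * z₁))) n
    have hsum : ∑ i ∈ Finset.range n,
        (1 + A (α ^ i * z₁)) * ∏ j ∈ Finset.Ico (i+1) n, (1 + B (α ^ j * z₁))
        = (n : ℂ) + ∑ i ∈ Finset.range n,
            ((A (α ^ i * z₁) + (i : ℂ) * B (α ^ i * z₁))
              * ∏ j ∈ Finset.Ico (i+1) n, (1 + B (α ^ j * z₁))) := by
      have step1 : ∀ i ∈ Finset.range n,
          (1 + A (α ^ i * z₁)) * ∏ j ∈ Finset.Ico (i+1) n, (1 + B (α ^ j * z₁))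
            = (1 + ∑ j ∈ Finset.Ico (i+1) n,
                B (α ^ j * z₁) * ∏ l ∈ Finset.Ico (j+1) n, (1 + B (α ^ l * z₁)))
              + A (α ^ i * z₁) * ∏ j ∈ Finset.Ico (i+1) n, (1 + B (α ^ j * z₁)) := by
        intro i _
        rw [add_mul, one_mul]
        nth_rewrite 1 [hPi i]
        ring
      rw [Finset.sum_congr rfl step1, Finset.sum_add_distrib, Finset.sum_add_distrib,
        hswap, Finset.sum_const, Finset.card_range, add_assoc, ← Finset.sum_add_distrib]
      have : ∀ i ∈ Finset.range n,
          (i : ℂ) * (B (α ^ i * z₁) * ∏ l ∈ Finset.Ico (i+1) n, (1 + B (α ^ l * z₁)))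
            + A (α ^ i * z₁) * ∏ j ∈ Finset.Ico (i+1) n, (1 + B (α ^ j * z₁))
          = (A (α ^ i * z₁) + (i : ℂ) * B (α ^ i * z₁))
              * ∏ j ∈ Finset.Ico (i+1) n, (1 + B (α ^ j * z₁)) := by
        intro i _; ring
      rw [Finset.sum_congr rfl this]
      simp [nsmul_eq_mul]
    have hreindex : ∑ k ∈ Finset.Icc 1 n,
        ((k : ℂ) * ((k : ℂ)⁻¹ * (A (α ^ (k-1) * z₁) + ((k-1 : ℕ) : ℂ) * B (α ^ (k-1) * z₁))
            * ∏ j ∈ Finset.Ico k n, (1 + B (α ^ j * z₁)))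
          + z₂ * (B (α ^ (k-1) * z₁) * ∏ j ∈ Finset.Ico k n, (1 + B (α ^ j * z₁))))
        = ∑ i ∈ Finset.range n,
            ((A (α ^ i * z₁) + (i : ℂ) * B (α ^ i * z₁))
                * ∏ j ∈ Finset.Ico (i+1) n, (1 + B (α ^ j * z₁))
              + z₂ * (B (α ^ i * z₁) * ∏ j ∈ Finset.Ico (i+1) n, (1 + B (α ^ j * z₁)))) := by
      rw [← Finset.Ico_add_one_right_eq_Icc, Finset.sum_Ico_eq_sum_range]
      have hnn : n + 1 - 1 = n := rfl
      rw [hnn]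
      refine Finset.sum_congr rfl fun i _ => ?_
      have hk : (1 + i) - 1 = i := by omega
      rw [hk, Nat.add_comm 1 i]
      have hne : ((i : ℂ) + 1) ≠ 0 := Nat.cast_add_one_ne_zero i
      push_cast
      field_simp
    rw [hreindex, hP0, hsum, Finset.sum_add_distrib, ← Finset.mul_sum,
      ← Finset.range_eq_Ico]
    ring
  · -- the bounds
    intro z₁ hz₁ k hk1 hkn
    have habs : ∀ j : ℕ, ‖B (α ^ j * z₁)‖
        ≤ C * ‖α‖ ^ j * ‖z₁‖ := by
      intro j
      calc ‖B (α ^ j * z₁)‖ ≤ C * ‖α ^ j * z₁‖ :=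
            hB _ (hsmall z₁ hz₁ j)
        _ = C * ‖α‖ ^ j * ‖z₁‖ := by rw [norm_mul, norm_pow]; ring
    have habsA : ∀ j : ℕ, ‖A (α ^ j * z₁)‖
        ≤ C * ‖α‖ ^ j * ‖z₁‖ := by
      intro j
      calc ‖A (α ^ j * z₁)‖ ≤ C * ‖α ^ j * z₁‖ :=
            hA _ (hsmall z₁ hz₁ j)
        _ = C * ‖α‖ ^ j * ‖z₁‖ := by rw [norm_mul, norm_pow]; ring
    have hIcc : Finset.Icc 1 (n-1) = Finset.Ico 1 n := by
      rw [← Finset.Ico_add_one_right_eq_Icc]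
      congr 1
      omega
    set Q : ℝ := ∏ j ∈ Finset.Ico 1 n, (1 + C * ‖α‖ ^ j * ‖z₁‖) with hQ
    have hfac : ∀ j : ℕ, (1:ℝ) ≤ 1 + C * ‖α‖ ^ j * ‖z₁‖ := by
      intro j
      have h0 : 0 ≤ C * ‖α‖ ^ j * ‖z₁‖ := by positivity
      linarith
    have hone : (1:ℝ) ≤ ∏ j ∈ Finset.Ico 1 k, (1 + C * ‖α‖ ^ j * ‖z₁‖) := by
      have := Finset.prod_le_prod (f := fun _ : ℕ => (1:ℝ))
        (g := fun j => 1 + C * ‖α‖ ^ j * ‖z₁‖)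
        (s := Finset.Ico 1 k) (by intros; norm_num) (fun j _ => hfac j)
      simpa using this
    have hQsplit : Q = (∏ j ∈ Finset.Ico 1 k, (1 + C * ‖α‖ ^ j * ‖z₁‖))
        * ∏ j ∈ Finset.Ico k n, (1 + C * ‖α‖ ^ j * ‖z₁‖) :=
      (Finset.prod_Ico_consecutive _ hk1 hkn).symm
    have hpos : (0:ℝ) ≤ ∏ j ∈ Finset.Ico k n, (1 + C * ‖α‖ ^ j * ‖z₁‖) :=
      Finset.prod_nonneg fun j _ => by linarith [hfac j]
    have hprodQ : ∏ j ∈ Finset.Ico k n, (1 + C * ‖α‖ ^ j * ‖z₁‖) ≤ Q := by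
      rw [hQsplit]
      exact le_mul_of_one_le_left hpos hone
    have hprod : ‖∏ j ∈ Finset.Ico k n, (1 + B (α ^ j * z₁))‖ ≤ Q := by
      rw [norm_prod]
      refine le_trans ?_ hprodQ
      refine Finset.prod_le_prod (fun j _ => norm_nonneg _) fun j _ => ?_
      calc ‖1 + B (α ^ j * z₁)‖
          ≤ ‖1‖ + ‖B (α ^ j * z₁)‖ := norm_add_le _ _
        _ ≤ 1 + C * ‖α‖ ^ j * ‖z₁‖ := by
            rw [norm_one]; linarith [habs j]
    have hQ0 : 0 ≤ Q := Finset.prod_nonneg fun j _ => by linarith [hfac j]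
    rw [hIcc]
    constructor
    · rw [norm_mul, norm_mul, norm_inv, Complex.norm_natCast]
      have hB1 : ‖A (α ^ (k-1) * z₁) + ((k-1:ℕ) : ℂ) * B (α ^ (k-1) * z₁)‖
          ≤ (k : ℝ) * (C * ‖α‖ ^ (k-1) * ‖z₁‖) := by
        calc ‖A (α ^ (k-1) * z₁) + ((k-1:ℕ) : ℂ) * B (α ^ (k-1) * z₁)‖
            ≤ ‖A (α ^ (k-1) * z₁)‖
              + ‖((k-1:ℕ) : ℂ) * B (α ^ (k-1) * z₁)‖ := norm_add_le _ _
          _ ≤ C * ‖α‖ ^ (k-1) * ‖z₁‖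
              + ((k-1:ℕ) : ℝ) * (C * ‖α‖ ^ (k-1) * ‖z₁‖) := by
              rw [norm_mul, Complex.norm_natCast]
              have h1 := habs (k-1)
              have h2 := habsA (k-1)
              have hk0 : (0:ℝ) ≤ ((k-1:ℕ):ℝ) := Nat.cast_nonneg _
              nlinarith
          _ = (1 + ((k-1:ℕ) : ℝ)) * (C * ‖α‖ ^ (k-1) * ‖z₁‖) := by ring
          _ = (k : ℝ) * (C * ‖α‖ ^ (k-1) * ‖z₁‖) := by
              congr 1
              have hkk : k - 1 + 1 = k := by omega
              rw [← hkk]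
              push_cast
              ring
      have hkpos : (0:ℝ) < (k : ℝ) := by exact_mod_cast hk1
      calc ((k:ℝ))⁻¹ * ‖A (α ^ (k-1) * z₁) + ((k-1:ℕ) : ℂ) * B (α ^ (k-1) * z₁)‖
            * ‖∏ j ∈ Finset.Ico k n, (1 + B (α ^ j * z₁))‖
          ≤ ((k:ℝ))⁻¹ * ((k : ℝ) * (C * ‖α‖ ^ (k-1) * ‖z₁‖)) * Q := by
            have h1 : 0 ≤ ((k:ℝ))⁻¹ := by positivity
            have h2 := norm_nonneg
              (A (α ^ (k-1) * z₁) + ((k-1:ℕ) : ℂ) * B (α ^ (k-1) * z₁))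
            have h3 := norm_nonneg (∏ j ∈ Finset.Ico k n, (1 + B (α ^ j * z₁)))
            apply mul_le_mul (by nlinarith) hprod h3 (by positivity)
        _ = C * ‖α‖ ^ (k-1) * Q * ‖z₁‖ := by
            field_simp
    · rw [norm_mul]
      calc ‖B (α ^ (k-1) * z₁)‖
            * ‖∏ j ∈ Finset.Ico k n, (1 + B (α ^ j * z₁))‖
          ≤ (C * ‖α‖ ^ (k-1) * ‖z₁‖) * Q :=
            mul_le_mul (habs (k-1)) hprod (norm_nonneg _) (by positivity)
        _ = C * ‖α‖ ^ (k-1) * Q * ‖z₁‖ := by ring
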